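/- Let k be a field, C a coalgebra over k, (Vᵢ)_{i∈ι} a family of k-subspaces of C, and W ⊆ C a k-subspace. Then (⋂ᵢ Vᵢ) ∨ W = ⋂ᵢ (Vᵢ ∨ W) and W ∨ (⋂ᵢ Vᵢ) = ⋂ᵢ (W ∨ Vᵢ). -/

import Mathlib

open TensorProduct

/-- The image of `V ⊗ W` in `C ⊗ C`, for subspaces `V, W` of `C`. -/
noncomputable def tensorImage {k C : Type*} [Field k] [AddCommGroup C] [Module k C]
    (V W : Submodule k C) : Submodule k (C ⊗[k] C) :=
  LinearMap.range (TensorProduct.map V.subtype W.subtype)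

/-- The wedge product `V ∨ W = Δ⁻¹(V ⊗ C + C ⊗ W)` of two subspaces of a coalgebra `C`. -/
noncomputable def wedge {k C : Type*} [Field k] [AddCommGroup C] [Module k C] [Coalgebra k C]
    (V W : Submodule k C) : Submodule k C :=
  (tensorImage V ⊤ ⊔ tensorImage ⊤ W).comap (Coalgebra.comul (R := k) (A := C))

namespace WedgeAux

open LinearMap

variable {k M M' N : Type*} [Field k] [AddCommGroup M] [Module k M]
  [AddCommGroup M'] [Module k M'] [AddCommGroup N] [Module k N]

lemma coordE_nat {ι : Type*} [DecidableEq ι] (b : Module.Basis ι k N) (f : M →ₗ[k] M')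
    (t : M ⊗[k] N) (j : ι) :
    finsuppScalarRight k k M' ι (lTensor M' b.repr.toLinearMap (rTensor N f t)) j
      = f (finsuppScalarRight k k M ι (lTensor M b.repr.toLinearMap t) j) := by
  induction t with
  | zero => simp
  | tmul m n => simp [finsuppScalarRight_apply_tmul_apply]
  | add x y hx hy => simp [map_add, hx, hy]

lemma rTensor_eq_zero_iff {ι : Type*} [DecidableEq ι] (b : Module.Basis ι k N) (f : M →ₗ[k] M')
    (t : M ⊗[k] N) :
    rTensor N f t = 0 ↔
      ∀ j, f (finsuppScalarRight k k M ι (lTensor M b.repr.toLinearMap t) j) = 0 := by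
  constructor
  · intro h j
    rw [← coordE_nat b, h]
    simp
  · intro h
    have h0 : lTensor M' b.repr.toLinearMap (rTensor N f t) = 0 := by
      apply (finsuppScalarRight k k M' ι).injective
      ext j
      simp [coordE_nat b, h j]
    have hinj : Function.Injective (lTensor M' b.repr.toLinearMap) :=
      Module.Flat.lTensor_preserves_injective_linearMap _ b.repr.injective
    apply hinj
    simpa using h0

lemma key_rTensor {ι' : Sort*} (Vs : ι' → Submodule k M) (t : M ⊗[k] N)
    (h : ∀ i, rTensor N (Vs i).mkQ t = 0) : rTensor N (⨅ i, Vs i).mkQ t = 0 := by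
  classical
  set b := Module.Basis.ofVectorSpace k N
  rw [rTensor_eq_zero_iff b]
  intro j
  rw [Submodule.mkQ_apply, Submodule.Quotient.mk_eq_zero, Submodule.mem_iInf]
  intro i
  have := (rTensor_eq_zero_iff b (Vs i).mkQ t).mp (h i) j
  rwa [Submodule.mkQ_apply, Submodule.Quotient.mk_eq_zero] at this

lemma comm_lTensor (f : M →ₗ[k] M') (t : N ⊗[k] M) :
    rTensor N f (TensorProduct.comm k N M t) = TensorProduct.comm k N M' (lTensor N f t) := by
  induction t with
  | zero => simp
  | tmul n m => simp
  | add x y hx hy => simp [map_add, hx, hy]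

lemma key_lTensor {ι' : Sort*} (Vs : ι' → Submodule k M) (t : N ⊗[k] M)
    (h : ∀ i, lTensor N (Vs i).mkQ t = 0) : lTensor N (⨅ i, Vs i).mkQ t = 0 := by
  have h' : ∀ i, rTensor N (Vs i).mkQ (TensorProduct.comm k N M t) = 0 := by
    intro i
    rw [comm_lTensor, h i, map_zero]
  have := key_rTensor Vs (TensorProduct.comm k N M t) h'
  rw [comm_lTensor] at this
  exact (_root_.map_eq_zero_iff _ (TensorProduct.comm k N _).injective).mp this

variable {C : Type*} [AddCommGroup C] [Module k C]

lemma tensorImage_top_right (V : Submodule k C) :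
    tensorImage V ⊤ = range (rTensor C V.subtype) := by
  have hsurj : Function.Surjective (⊤ : Submodule k C).subtype := by
    intro x; exact ⟨⟨x, trivial⟩, rfl⟩
  rw [tensorImage, ← rTensor_comp_lTensor, range_comp,
    range_eq_top.mpr (lTensor_surjective V hsurj), Submodule.map_top]

lemma tensorImage_top_left (W : Submodule k C) :
    tensorImage ⊤ W = range (lTensor C W.subtype) := by
  have hsurj : Function.Surjective (⊤ : Submodule k C).subtype := by
    intro x; exact ⟨⟨x, trivial⟩, rfl⟩
  rw [tensorImage, ← lTensor_comp_rTensor, range_comp,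
    range_eq_top.mpr (rTensor_surjective W hsurj), Submodule.map_top]

lemma ker_map_eq (V W : Submodule k C) :
    ker (TensorProduct.map V.mkQ W.mkQ) = tensorImage V ⊤ ⊔ tensorImage ⊤ W := by
  rw [TensorProduct.map_ker (LinearMap.exact_subtype_mkQ V) (Submodule.mkQ_surjective V)
    (LinearMap.exact_subtype_mkQ W) (Submodule.mkQ_surjective W),
    tensorImage_top_right, tensorImage_top_left, sup_comm]

lemma tensorImage_mono {V V' W W' : Submodule k C} (hV : V ≤ V') (hW : W ≤ W') :
    tensorImage V W ≤ tensorImage V' W' := by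
  have heq : TensorProduct.map V.subtype W.subtype =
      (TensorProduct.map V'.subtype W'.subtype).comp
        (TensorProduct.map (Submodule.inclusion hV) (Submodule.inclusion hW)) := by
    rw [← TensorProduct.map_comp, Submodule.subtype_comp_inclusion,
      Submodule.subtype_comp_inclusion]
  rw [tensorImage, heq, tensorImage, range_comp]
  exact LinearMap.map_le_range

variable [Coalgebra k C]

lemma mem_wedge_iff (V W : Submodule k C) (x : C) :
    x ∈ wedge V W ↔
      TensorProduct.map V.mkQ W.mkQ (Coalgebra.comul (R := k) x) = 0 := by
  rw [wedge, Submodule.mem_comap, ← ker_map_eq, mem_ker]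

lemma wedge_mono {V V' W W' : Submodule k C} (hV : V ≤ V') (hW : W ≤ W') :
    wedge V W ≤ wedge V' W' :=
  Submodule.comap_mono (sup_le_sup (tensorImage_mono hV le_rfl) (tensorImage_mono le_rfl hW))

end WedgeAux

/-- Wedge products distribute over arbitrary intersections of subspaces, on either side. -/
theorem wedge_iInf {k C : Type*} [Field k] [AddCommGroup C] [Module k C] [Coalgebra k C]
    {ι : Sort*} (Vs : ι → Submodule k C) (W : Submodule k C) :
    wedge (⨅ i, Vs i) W = (⨅ i, wedge (Vs i) W) ∧
      wedge W (⨅ i, Vs i) = (⨅ i, wedge W (Vs i)) := by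
  open WedgeAux LinearMap in
  constructor
  · refine le_antisymm (le_iInf fun i => wedge_mono (iInf_le Vs i) le_rfl) ?_
    intro x hx
    rw [Submodule.mem_iInf] at hx
    rw [mem_wedge_iff, ← rTensor_comp_lTensor, comp_apply]
    apply key_rTensor
    intro i
    have := (mem_wedge_iff _ _ _).mp (hx i)
    rwa [← rTensor_comp_lTensor, comp_apply] at this
  · refine le_antisymm (le_iInf fun i => wedge_mono le_rfl (iInf_le Vs i)) ?_
    intro x hx
    rw [Submodule.mem_iInf] at hx
    rw [mem_wedge_iff, ← lTensor_comp_rTensor, comp_apply]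
    apply key_lTensor
    intro i
    have := (mem_wedge_iff _ _ _).mp (hx i)
    rwa [← lTensor_comp_rTensor, comp_apply] at this
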